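/- Let (C,λ) be a (p⁺,N₀)-divergent LMC such that additionally inf{ P⁺(s) : λ(s) > N₀ } > 0, with F, α, 1/2 < p < p⁺, and C' the biased chain of (C,F) →^α (W^p,[0,N₀]). Then for every T ⊆ F, C' is decisive w.r.t. T and, from every state, the expected time to reach T ∪ Av_{C'}(T) is finite. -/

import Mathlib

open scoped ENNReal NNReal BigOperators
open Filter

noncomputable section

variable {S : Type*}

/-- Probability of following a finite path (list of successive states). -/
def pathProb (P : S → S → ℝ≥0∞) : List S → ℝ≥0∞
  | [] => 1
  | [_] => 1
  | a :: b :: l => P a b * pathProb P (b :: l)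

/-- `l` is a finite path starting at `s` that visits `T` for the first time
at its last element. -/
def FirstHitPath (T : Set S) (s : S) (l : List S) : Prop :=
  l.head? = some s ∧ ∃ h : l ≠ [], l.getLast h ∈ T ∧
    ∀ i : Fin l.length, (i : ℕ) + 1 < l.length → l.get i ∉ T

/-- Probability of eventually reaching `T` from `s`. -/
def reachProb (P : S → S → ℝ≥0∞) (T : Set S) (s : S) : ℝ≥0∞ :=
  ∑' l : {l : List S // FirstHitPath T s l}, pathProb P (l : List S)

/-- The avoid set: states from which `T` is unreachable. -/
def Av (P : S → S → ℝ≥0∞) (T : Set S) : Set S := {s | reachProb P T s = 0}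

/-- Probability that, starting from `s`, the chain stays outside `R`
during its first `n` steps (i.e. the hitting time of `R` is `> n`). -/
def surviveProb (P : S → S → ℝ≥0∞) (R : Set S) (s : S) (n : ℕ) : ℝ≥0∞ :=
  ∑' l : {l : List S // l.length = n + 1 ∧ l.head? = some s ∧ ∀ x ∈ l, x ∉ R},
    pathProb P (l : List S)

/-- Expected hitting time of `R` from `s`, via `E τ = ∑_{n≥0} Pr(τ > n)`. -/
def expHittingTime (P : S → S → ℝ≥0∞) (R : Set S) (s : S) : ℝ≥0∞ :=
  ∑' n : ℕ, surviveProb P R s n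

/-- Probability that `X_i ∈ A` for all `i ≥ m`, starting from `s`
(as the infimum over finite horizons). -/
def confineProb (P : S → S → ℝ≥0∞) (A : Set S) (s : S) (m : ℕ) : ℝ≥0∞ :=
  ⨅ n : ℕ, ∑' l : {l : List S // l.length = n + 1 ∧ l.head? = some s ∧
      ∀ i : Fin l.length, m ≤ (i : ℕ) → l.get i ∈ A}, pathProb P (l : List S)

/-- Expected reward collected at the first visit of `T`. -/
def expReward (P : S → S → ℝ≥0∞) (L : List S → ℝ≥0∞) (T : Set S) (s : S) : ℝ≥0∞ :=
  ∑' l : {l : List S // FirstHitPath T s l}, L l * pathProb P (l : List S)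

/-- `P` is a stochastic matrix. -/
def IsStochastic (P : S → S → ℝ≥0∞) : Prop := ∀ s, ∑' s', P s s' = 1

/-- States of the biased chain other than `s₋`. -/
abbrev SA (P : S → S → ℝ≥0∞) (F : Set S) := {s : S // s ∉ Av P F}

/-- `P'` (on `(S ∖ Av(F)) ⊎ {s₋}`, with `none = s₋`) is a biased Markov chain
of `(C, T, F)`. -/
def IsBiased (P : S → S → ℝ≥0∞) (T F : Set S)
    (P' : Option (SA P F) → Option (SA P F) → ℝ≥0∞) : Prop :=
  IsStochastic P' ∧
  P' none none = 1 ∧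
  (∀ s : SA P F, s.val ∈ T → P' (some s) (some s) = 1) ∧
  (∀ s s' : SA P F, 0 < P s.val s'.val → 0 < P' (some s) (some s'))

/-- `(C^•, F^•)` together with `α` is an abstraction of `(C, F)`. -/
def IsAbstraction (P : S → S → ℝ≥0∞) (F : Set S)
    {S' : Type*} (P' : S' → S' → ℝ≥0∞) (F' : Set S')
    (α : SA P F → S') : Prop :=
  (∀ s : SA P F, s.val ∈ F → α s ∈ F') ∧
  (∀ s : SA P F, s.val ∉ F →
    ∑' s' : SA P F, P s.val s'.val * reachProb P' F' (α s')
      ≤ reachProb P' F' (α s))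

/-- The decreasing ratio `h(s)` of an abstraction. -/
def hRatio (P : S → S → ℝ≥0∞) (F : Set S)
    {S' : Type*} (P' : S' → S' → ℝ≥0∞) (F' : Set S')
    (α : SA P F → S') (s : SA P F) : ℝ≥0∞ :=
  (∑' s' : SA P F, P s.val s'.val * reachProb P' F' (α s'))
    / reachProb P' F' (α s)

/-- The biased Markov chain constructed from an abstraction. -/
def biasedKernel (P : S → S → ℝ≥0∞) (F : Set S)
    {S' : Type*} (P' : S' → S' → ℝ≥0∞) (F' : Set S')
    (α : SA P F → S') :
    Option (SA P F) → Option (SA P F) → ℝ≥0∞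
  | none, none => 1
  | none, some _ => 0
  | some s, none => 1 - hRatio P F P' F' α s
  | some s, some s' =>
      P s.val s'.val * reachProb P' F' (α s') / reachProb P' F' (α s)

/-- The random walk `W^p` on `ℕ`: `0` absorbing, up with probability `p`,
down with probability `1 - p`. -/
def walkKernel (p : ℝ≥0∞) : ℕ → ℕ → ℝ≥0∞ := fun m n =>
  if m = 0 then (if n = 0 then 1 else 0)
  else if n = m + 1 then p
  else if n + 1 = m then 1 - p
  else 0

/-- `(C, λ)` is a layered Markov chain. -/
def IsLMC (P : S → S → ℝ≥0∞) (lam : S → ℕ) : Prop :=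
  (∀ s s', 0 < P s s' → (lam s : ℤ) ≤ (lam s' : ℤ) + 1) ∧
  (∀ n : ℕ, {s : S | lam s = n}.Finite)

/-- Total probability of increasing the level. -/
def Pup (P : S → S → ℝ≥0∞) (lam : S → ℕ) (s : S) : ℝ≥0∞ :=
  ∑' s' : {s' : S // lam s < lam s'}, P s s'

/-- Total probability of decreasing the level (by one). -/
def Pdown (P : S → S → ℝ≥0∞) (lam : S → ℕ) (s : S) : ℝ≥0∞ :=
  ∑' s' : {s' : S // lam s' + 1 = lam s}, P s s'

/-- Total probability of keeping the same level. -/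
def Peq (P : S → S → ℝ≥0∞) (lam : S → ℕ) (s : S) : ℝ≥0∞ :=
  ∑' s' : {s' : S // lam s' = lam s}, P s s'

/-- `(C, λ)` is `(p⁺, N₀)`-divergent. -/
def Divergent (P : S → S → ℝ≥0∞) (lam : S → ℕ) (pplus : ℝ≥0∞) (N₀ : ℕ) : Prop :=
  1/2 < pplus ∧ ∀ s : S, N₀ < lam s → Peq P lam s < 1 →
    pplus ≤ Pup P lam s / (Pdown P lam s + Pup P lam s)

end

/- ======================= Auxiliary general lemmas ======================= -/

section Gen

variable {σ : Type*}

lemma IsStochastic.le_one' {P : σ → σ → ℝ≥0∞} (hP : IsStochastic P) (a b : σ) : P a b ≤ 1 := by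
  rw [← hP a]; exact ENNReal.le_tsum b

lemma pathProb_cons' {P : σ → σ → ℝ≥0∞} (a b : σ) (l : List σ) :
    pathProb P (a :: b :: l) = P a b * pathProb P (b :: l) := rfl

lemma pathProb_le_one {P : σ → σ → ℝ≥0∞} (hP : ∀ a b, P a b ≤ 1) :
    ∀ l : List σ, pathProb P l ≤ 1
  | [] => le_rfl
  | [_] => le_rfl
  | a :: b :: l => by
      rw [pathProb_cons']
      calc P a b * pathProb P (b :: l) ≤ 1 * 1 :=
        mul_le_mul' (hP a b) (pathProb_le_one hP (b :: l))
      _ = 1 := one_mul 1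

lemma tsum_option'' {α : Type*} (f : Option α → ℝ≥0∞) :
    ∑' o : Option α, f o = f none + ∑' a : α, f (some a) := by
  classical
  have h0 : ∀ o : Option α, f o = (if o = none then f o else 0) + (if o = none then 0 else f o) := by
    intro o; split_ifs <;> simp
  rw [tsum_congr h0, ENNReal.tsum_add]
  congr 1
  · rw [tsum_eq_single (none : Option α)]
    · simp
    · rintro (_ | a) h
      · exact absurd rfl h
      · simp
  · rw [← Function.Injective.tsum_eq (Option.some_injective α)
        (f := fun o : Option α => if o = none then 0 else f o) ?_]
    · exact tsum_congr fun a => by simp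
    · rintro (_ | a) ho
      · simp at ho
      · exact ⟨a, rfl⟩

lemma eq_cons_tail {l : List σ} {s : σ} (h1 : l.head? = some s) : s :: l.tail = l := by
  cases l with
  | nil => simp at h1
  | cons a t => simp only [List.head?_cons, Option.some.injEq] at h1; subst h1; rfl

/-- Equivalence between lists satisfying `D` (which forces head `s`) and their tails. -/
def consEquiv (s : σ) (D : List σ → Prop) (hD : ∀ l, D l → l.head? = some s) :
    {t : List σ // D (s :: t)} ≃ {l : List σ // D l} where
  toFun t := ⟨s :: t.val, t.2⟩
  invFun l := ⟨l.val.tail, by rw [eq_cons_tail (hD _ l.2)]; exact l.2⟩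
  left_inv t := rfl
  right_inv l := Subtype.ext (eq_cons_tail (hD _ l.2))

/-- Re-index a sum over lists constrained to start with `s` by their tails. -/
lemma tsum_cons_reindex {s : σ} {D : List σ → Prop}
    (hD : ∀ l, D l → l.head? = some s) (f : List σ → ℝ≥0∞) :
    ∑' l : {l : List σ // D l}, f l.val = ∑' t : {t : List σ // D (s :: t)}, f (s :: t.val) := by
  rw [← (consEquiv s D hD).tsum_eq (fun l : {l : List σ // D l} => f l.val)]
  exact tsum_congr fun t => rfl

/-- Equivalence grouping nonempty lists by their heads. -/
def headSigmaEquiv (C : List σ → Prop) (hC : ∀ l, C l → l ≠ []) :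
    (Σ s : σ, {l : List σ // l.head? = some s ∧ C l}) ≃ {l : List σ // C l} where
  toFun p := ⟨p.2.val, p.2.2.2⟩
  invFun l := ⟨l.val.head (hC _ l.2), ⟨l.val, List.head?_eq_head _, l.2⟩⟩
  left_inv p := by
    obtain ⟨s', l, h1, h2⟩ := p
    have h3 : l.head (hC l h2) = s' := by
      have := List.head?_eq_head (hC l h2); rw [h1] at this; exact (Option.some.inj this).symm
    subst h3
    rfl
  right_inv l := rfl

/-- Group a sum over nonempty lists by their heads. -/
lemma tsum_head_sigma {C : List σ → Prop} (hC : ∀ l, C l → l ≠ []) (f : List σ → ℝ≥0∞) :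
    ∑' l : {l : List σ // C l}, f l.val
      = ∑' (s : σ), ∑' l : {l : List σ // l.head? = some s ∧ C l}, f l.val := by
  refine Eq.trans ?_ (ENNReal.tsum_sigma'
    (fun p : (Σ s : σ, {l : List σ // l.head? = some s ∧ C l}) => f p.2.val))
  exact ((headSigmaEquiv C hC).tsum_eq (fun l : {l : List σ // C l} => f l.val)).symm

end Gen

section Chain

variable {σ : Type*}

lemma tsum_subtype_congr' {α : Type*} {p q : α → Prop} (h : ∀ a, p a ↔ q a) (f : α → ℝ≥0∞) :
    ∑' x : {a // p a}, f x.val = ∑' x : {a // q a}, f x.val :=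
  (Equiv.subtypeEquivRight h).tsum_eq (fun x : {a // q a} => f x.val)

lemma tsum_subtype_le_of_imp {α : Type*} {p q : α → Prop} (h : ∀ a, p a → q a) (f : α → ℝ≥0∞) :
    ∑' x : {a // p a}, f x.val ≤ ∑' x : {a // q a}, f x.val :=
  Summable.tsum_le_tsum_of_inj (fun x : {a // p a} => (⟨x.val, h _ x.2⟩ : {a // q a}))
    (fun a b hab => Subtype.ext (by injection hab))
    (fun _ _ => zero_le) (fun _ => le_rfl) ENNReal.summable ENNReal.summable

lemma mem_of_head?' {l : List σ} {s : σ} (h : l.head? = some s) : s ∈ l := by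
  rw [← eq_cons_tail h]; exact List.mem_cons_self

lemma length_one_head {l : List σ} {s : σ} (hlen : l.length = 1) (hh : l.head? = some s) :
    l = [s] := by
  obtain ⟨a, rfl⟩ := List.length_eq_one_iff.mp hlen
  simp only [List.head?_cons, Option.some.injEq] at hh; subst hh; rfl

lemma fhp_def' {T : Set σ} {s : σ} {l : List σ} :
    FirstHitPath T s l ↔ l.head? = some s ∧ ∃ h : l ≠ [], l.getLast h ∈ T ∧
      ∀ (i : ℕ) (hi : i < l.length), i + 1 < l.length → l.get ⟨i, hi⟩ ∉ T := by
  constructor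
  · rintro ⟨h1, hne, hlast, hint⟩
    exact ⟨h1, hne, hlast, fun i hi hc => hint ⟨i, hi⟩ hc⟩
  · rintro ⟨h1, hne, hlast, hint⟩
    exact ⟨h1, hne, hlast, fun i hc => hint i.val i.isLt hc⟩

variable (P : σ → σ → ℝ≥0∞) (R T : Set σ)

lemma surviveProb_of_mem {s : σ} (hs : s ∈ R) (n : ℕ) : surviveProb P R s n = 0 := by
  unfold surviveProb
  have : IsEmpty {l : List σ // l.length = n + 1 ∧ l.head? = some s ∧ ∀ x ∈ l, x ∉ R} := by
    constructor; rintro ⟨l, hlen, hhead, havoid⟩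
    exact havoid s (mem_of_head?' hhead) hs
  exact tsum_empty

lemma surviveProb_zero' {s : σ} (hs : s ∉ R) : surviveProb P R s 0 = 1 := by
  unfold surviveProb
  refine Eq.trans (tsum_eq_single
    (⟨[s], rfl, rfl, ?_⟩ :
      {l : List σ // l.length = 0 + 1 ∧ l.head? = some s ∧ ∀ x ∈ l, x ∉ R}) ?_) rfl
  · intro x hx; simp only [List.mem_singleton] at hx; subst hx; exact hs
  · rintro ⟨l, hlen, hh, hav⟩ hne
    exact absurd (Subtype.ext (length_one_head hlen hh)) hne

open Classical in
lemma surviveProb_succ' (n : ℕ) (s : σ) :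
    surviveProb P R s (n + 1)
      = if s ∈ R then 0 else ∑' s' : σ, P s s' * surviveProb P R s' n := by
  split_ifs with hs
  · exact surviveProb_of_mem P R hs _
  · unfold surviveProb
    have hC : ∀ t : List σ, (t.length = n + 1 ∧ ∀ x ∈ t, x ∉ R) → t ≠ [] := by
      rintro t ⟨h1, -⟩ rfl; simp at h1
    calc ∑' l : {l : List σ // l.length = n + 1 + 1 ∧ l.head? = some s ∧ ∀ x ∈ l, x ∉ R},
          pathProb P l.val
        = ∑' t : {t : List σ // (s :: t).length = n + 1 + 1 ∧ (s :: t).head? = some s ∧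
            ∀ x ∈ s :: t, x ∉ R}, pathProb P (s :: t.val) :=
          tsum_cons_reindex (fun l hl => hl.2.1) (pathProb P)
      _ = ∑' t : {t : List σ // t.length = n + 1 ∧ ∀ x ∈ t, x ∉ R}, pathProb P (s :: t.val) := by
          refine (tsum_subtype_congr' (fun t => ?_) (fun t => pathProb P (s :: t))).symm
          constructor
          · rintro ⟨h1, h3⟩
            refine ⟨by simpa using h1, rfl, ?_⟩
            intro x hx
            rcases List.mem_cons.mp hx with hx | hx
            · subst hx; exact hs
            · exact h3 x hx
          · rintro ⟨h1, -, h3⟩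
            exact ⟨by simpa using h1, fun x hx => h3 x (List.mem_cons_of_mem _ hx)⟩
      _ = ∑' s' : σ, ∑' t : {t : List σ // t.head? = some s' ∧
            (t.length = n + 1 ∧ ∀ x ∈ t, x ∉ R)}, pathProb P (s :: t.val) :=
          tsum_head_sigma hC (fun t => pathProb P (s :: t))
      _ = ∑' s' : σ, P s s' * surviveProb P R s' n := by
          refine tsum_congr fun s' => ?_
          calc ∑' t : {t : List σ // t.head? = some s' ∧ (t.length = n + 1 ∧ ∀ x ∈ t, x ∉ R)},
                pathProb P (s :: t.val)
              = ∑' t : {t : List σ // t.head? = some s' ∧ (t.length = n + 1 ∧ ∀ x ∈ t, x ∉ R)},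
                P s s' * pathProb P t.val := by
                refine tsum_congr fun t => ?_
                obtain ⟨t, h1, h2⟩ := t
                show pathProb P (s :: t) = P s s' * pathProb P t
                rw [← eq_cons_tail h1]
                exact pathProb_cons' s s' _
            _ = ∑' t : {t : List σ // t.length = n + 1 ∧ t.head? = some s' ∧ ∀ x ∈ t, x ∉ R},
                P s s' * pathProb P t.val :=
                (tsum_subtype_congr' (fun t => by tauto) (fun t => P s s' * pathProb P t)).symm
            _ = P s s' * surviveProb P R s' n := ENNReal.tsum_mul_left

/-- First-hit paths: basic facts -/
lemma fhp_ne_nil {s : σ} {l : List σ} (h : FirstHitPath T s l) : l ≠ [] := by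
  obtain ⟨-, hne, -⟩ := h; exact hne

lemma fhp_self {s : σ} (hs : s ∈ T) : FirstHitPath T s [s] := by
  rw [fhp_def']
  refine ⟨rfl, List.cons_ne_nil s [], by simpa using hs, ?_⟩
  intro i hi hc
  simp only [List.length_singleton] at hc
  omega

lemma fhp_eq_singleton {s : σ} {l : List σ} (hs : s ∈ T) (h : FirstHitPath T s l) :
    l = [s] := by
  rw [fhp_def'] at h
  obtain ⟨h1, hne, hlast, hint⟩ := h
  obtain ⟨a, t, rfl⟩ := List.exists_cons_of_ne_nil hne
  simp only [List.head?_cons, Option.some.injEq] at h1; subst h1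
  cases t with
  | nil => rfl
  | cons b u =>
    refine absurd hs (hint 0 (by simp) ?_)
    simp only [List.length_cons]; omega

lemma reachProb_of_mem {s : σ} (hs : s ∈ T) : reachProb P T s = 1 := by
  unfold reachProb
  have h := tsum_eq_single (L := SummationFilter.unconditional _) (⟨[s], fhp_self T hs⟩ : {l : List σ // FirstHitPath T s l})
    (f := fun l : {l : List σ // FirstHitPath T s l} => pathProb P l.val) ?_
  · exact h
  · rintro ⟨l, hl⟩ hne
    exact absurd (Subtype.ext (fhp_eq_singleton T hs hl)) hne

lemma fhp_cons_ne_nil {s : σ} {t : List σ} (hs : s ∉ T) (h : FirstHitPath T s (s :: t)) :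
    t ≠ [] := by
  rintro rfl
  obtain ⟨-, hne, hlast, -⟩ := h
  simp only [List.getLast_singleton] at hlast
  exact hs hlast

lemma fhp_cons_iff {s : σ} (t : List σ) (hs : s ∉ T) (ht : t ≠ []) :
    FirstHitPath T s (s :: t) ↔ FirstHitPath T (t.head ht) t := by
  rw [fhp_def', fhp_def']
  constructor
  · rintro ⟨h1, hne, hlast, hint⟩
    refine ⟨List.head?_eq_head ht, ht, by rwa [List.getLast_cons ht] at hlast, ?_⟩
    intro i hi hc
    have h2 := hint (i + 1) (by simp only [List.length_cons]; omega)
      (by simp only [List.length_cons]; omega)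
    simp only [List.get_cons_succ] at h2
    exact h2
  · rintro ⟨h1, hne, hlast, hint⟩
    refine ⟨rfl, List.cons_ne_nil _ _, by rw [List.getLast_cons ht]; exact hlast, ?_⟩
    intro i hi hc
    simp only [List.length_cons] at hi hc
    cases i with
    | zero => exact hs
    | succ j =>
      have h2 := hint j (by omega) (by omega)
      simp only [List.get_cons_succ]
      exact h2

end Chain

section Chain2

variable {σ : Type*}

/-- First-hit probability within a bounded number of steps. -/
noncomputable def reachN (P : σ → σ → ℝ≥0∞) (T : Set σ) (s : σ) (n : ℕ) : ℝ≥0∞ :=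
  ∑' l : {l : List σ // FirstHitPath T s l ∧ l.length ≤ n + 1}, pathProb P l.val

variable (P : σ → σ → ℝ≥0∞) (R T : Set σ)

lemma reachN_of_mem {s : σ} (hs : s ∈ T) (n : ℕ) : reachN P T s n = 1 := by
  unfold reachN
  have huniq : ∀ b' : {l : List σ // FirstHitPath T s l ∧ l.length ≤ n + 1},
      b' ≠ ⟨[s], fhp_self T hs, by simp⟩ → pathProb P b'.val = 0 := by
    rintro ⟨l, hl, hlen⟩ hne
    exact absurd (Subtype.ext (fhp_eq_singleton T hs hl)) hne
  exact (tsum_eq_single _ huniq).trans rfl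

lemma reachN_zero_of_not_mem {s : σ} (hs : s ∉ T) : reachN P T s 0 = 0 := by
  unfold reachN
  have : IsEmpty {l : List σ // FirstHitPath T s l ∧ l.length ≤ 0 + 1} := by
    constructor; rintro ⟨l, hf, hlen⟩
    have hne := fhp_ne_nil T hf
    have h1 : l.length = 1 := by
      have := List.length_pos_iff.mpr hne; omega
    have h2 : l = [s] := length_one_head h1 hf.1
    subst h2
    obtain ⟨-, hne2, hlast, -⟩ := hf
    simp only [List.getLast_singleton] at hlast
    exact hs hlast
  exact tsum_empty

lemma reachN_succ' {s : σ} (hs : s ∉ T) (n : ℕ) :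
    reachN P T s (n + 1) = ∑' s' : σ, P s s' * reachN P T s' n := by
  unfold reachN
  have hD : ∀ l : List σ, (FirstHitPath T s l ∧ l.length ≤ n + 1 + 1) → l.head? = some s :=
    fun l hl => hl.1.1
  have hC : ∀ t : List σ, (FirstHitPath T s (s :: t) ∧ (s :: t).length ≤ n + 1 + 1) → t ≠ [] :=
    fun t ht => fhp_cons_ne_nil T hs ht.1
  calc ∑' l : {l : List σ // FirstHitPath T s l ∧ l.length ≤ n + 1 + 1}, pathProb P l.val
      = ∑' t : {t : List σ // FirstHitPath T s (s :: t) ∧ (s :: t).length ≤ n + 1 + 1},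
          pathProb P (s :: t.val) := tsum_cons_reindex hD (pathProb P)
    _ = ∑' s' : σ, ∑' t : {t : List σ // t.head? = some s' ∧
          (FirstHitPath T s (s :: t) ∧ (s :: t).length ≤ n + 1 + 1)}, pathProb P (s :: t.val) :=
        tsum_head_sigma hC (fun t => pathProb P (s :: t))
    _ = ∑' s' : σ, P s s' * reachN P T s' n := by
        refine tsum_congr fun s' => ?_
        calc ∑' t : {t : List σ // t.head? = some s' ∧
              (FirstHitPath T s (s :: t) ∧ (s :: t).length ≤ n + 1 + 1)}, pathProb P (s :: t.val)
            = ∑' t : {t : List σ // t.head? = some s' ∧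
              (FirstHitPath T s (s :: t) ∧ (s :: t).length ≤ n + 1 + 1)},
              P s s' * pathProb P t.val := by
              refine tsum_congr fun t => ?_
              obtain ⟨t, h1, h2⟩ := t
              show pathProb P (s :: t) = P s s' * pathProb P t
              rw [← eq_cons_tail h1]
              exact pathProb_cons' s s' _
          _ = ∑' t : {t : List σ // FirstHitPath T s' t ∧ t.length ≤ n + 1},
              P s s' * pathProb P t.val := by
              refine (tsum_subtype_congr' (fun t => ?_) (fun t => P s s' * pathProb P t)).symm
              constructor
              · rintro ⟨hf, hlen⟩
                have ht : t ≠ [] := fhp_ne_nil T hf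
                have hhead : t.head ht = s' := by
                  have := List.head?_eq_head ht; rw [hf.1] at this
                  exact (Option.some.inj this).symm
                refine ⟨hf.1, ?_, by simp only [List.length_cons]; omega⟩
                refine (fhp_cons_iff T t hs ht).mpr ?_
                rw [hhead]
                exact hf
              · rintro ⟨hh, hf, hlen⟩
                have ht : t ≠ [] := fhp_cons_ne_nil T hs hf
                have hhead : t.head ht = s' := by
                  have := List.head?_eq_head ht; rw [hh] at this
                  exact (Option.some.inj this).symm
                refine ⟨?_, by simp only [List.length_cons] at hlen; omega⟩
                rw [← hhead]
                exact (fhp_cons_iff T t hs ht).mp hf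
          _ = P s s' * reachN P T s' n := ENNReal.tsum_mul_left

lemma reachN_split (hP : IsStochastic P) : ∀ n (s : σ), reachN P R s n + surviveProb P R s n = 1 := by
  intro n
  induction n with
  | zero =>
    intro s
    by_cases hs : s ∈ R
    · rw [reachN_of_mem P R hs, surviveProb_of_mem P R hs]; simp
    · rw [reachN_zero_of_not_mem P R hs, surviveProb_zero' P R hs]; simp
  | succ n ih =>
    intro s
    by_cases hs : s ∈ R
    · rw [reachN_of_mem P R hs, surviveProb_of_mem P R hs]; simp
    · rw [reachN_succ' P R hs, surviveProb_succ', if_neg hs, ← ENNReal.tsum_add]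
      calc ∑' s' : σ, (P s s' * reachN P R s' n + P s s' * surviveProb P R s' n)
          = ∑' s' : σ, P s s' := tsum_congr fun s' => by rw [← mul_add, ih, mul_one]
        _ = 1 := hP s

lemma reachN_le_one (hP : IsStochastic P) (s : σ) (n : ℕ) : reachN P R s n ≤ 1 :=
  le_trans le_self_add (le_of_eq (reachN_split P R hP n s))

lemma surviveProb_le_one (hP : IsStochastic P) (s : σ) (n : ℕ) : surviveProb P R s n ≤ 1 :=
  le_trans le_add_self (le_of_eq (reachN_split P R hP n s))

lemma reachN_mono (s : σ) {n m : ℕ} (hnm : n ≤ m) : reachN P T s n ≤ reachN P T s m :=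
  tsum_subtype_le_of_imp (fun l h => ⟨h.1, h.2.trans (by omega)⟩) (pathProb P)

lemma surviveProb_antitone (hP : IsStochastic P) (s : σ) {n m : ℕ} (hnm : n ≤ m) :
    surviveProb P R s m ≤ surviveProb P R s n := by
  have key : surviveProb P R s m + reachN P R s n ≤ surviveProb P R s n + reachN P R s n := by
    calc surviveProb P R s m + reachN P R s n
        ≤ surviveProb P R s m + reachN P R s m := by
          exact add_le_add_right (reachN_mono P R s hnm) _
      _ = 1 := by rw [add_comm]; exact reachN_split P R hP m s
      _ = surviveProb P R s n + reachN P R s n := by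
          rw [add_comm]; exact (reachN_split P R hP n s).symm
  have hfin : reachN P R s n ≠ ⊤ := (lt_of_le_of_lt (reachN_le_one P R hP s n)
    (by simp : (1:ℝ≥0∞) < ⊤)).ne
  exact (ENNReal.add_le_add_iff_right hfin).mp key

lemma tsum_iSup_swap {ι : Type*} (g : ℕ → ι → ℝ≥0∞) (hg : ∀ i, Monotone fun n => g n i) :
    ∑' i, ⨆ n, g n i = ⨆ n, ∑' i, g n i := by
  refine le_antisymm ?_ (iSup_le fun n => Summable.tsum_le_tsum (fun i => le_iSup (fun n => g n i) n)
    ENNReal.summable ENNReal.summable)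
  rw [ENNReal.tsum_eq_iSup_sum]
  refine iSup_le fun A => ?_
  rw [ENNReal.finsetSum_iSup_of_monotone (fun i => hg i)]
  exact iSup_mono fun n => ENNReal.sum_le_tsum A

open Classical in
lemma reachProb_eq_iSup (s : σ) : reachProb P T s = ⨆ n, reachN P T s n := by
  have key : ∀ n : ℕ, reachN P T s n
      = ∑' l : {l : List σ // FirstHitPath T s l},
          (if l.val.length ≤ n + 1 then pathProb P l.val else 0) := by
    intro n
    unfold reachN
    rw [← Function.Injective.tsum_eq
      (g := fun x : {l : List σ // FirstHitPath T s l ∧ l.length ≤ n + 1} =>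
        (⟨x.val, x.2.1⟩ : {l : List σ // FirstHitPath T s l}))
      (fun a b hab => Subtype.ext (by injection hab))
      (f := fun l : {l : List σ // FirstHitPath T s l} =>
        if l.val.length ≤ n + 1 then pathProb P l.val else 0) ?_]
    · exact tsum_congr fun x => (if_pos x.2.2).symm
    · rintro ⟨l, hl⟩ hmem
      have hlen : l.length ≤ n + 1 := by
        by_contra hcon
        simp only [Function.mem_support, if_neg hcon] at hmem
        exact hmem rfl
      exact ⟨⟨l, hl, hlen⟩, rfl⟩
  calc reachProb P T s
      = ∑' l : {l : List σ // FirstHitPath T s l},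
          ⨆ n, (if l.val.length ≤ n + 1 then pathProb P l.val else 0) := by
        unfold reachProb
        refine tsum_congr fun l => ?_
        refine le_antisymm ?_ (iSup_le fun n => by split_ifs <;> simp)
        exact le_trans (le_of_eq (if_pos (by omega : l.val.length ≤ l.val.length + 1)).symm)
          (le_iSup (fun n => if l.val.length ≤ n + 1 then pathProb P l.val else 0) l.val.length)
    _ = ⨆ n, ∑' l : {l : List σ // FirstHitPath T s l},
          (if l.val.length ≤ n + 1 then pathProb P l.val else 0) := by
        refine tsum_iSup_swap _ fun l => ?_
        intro n m hnm
        dsimp only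
        by_cases h : l.val.length ≤ n + 1
        · rw [if_pos h, if_pos (by omega)]
        · rw [if_neg h]; exact zero_le
    _ = ⨆ n, reachN P T s n := by
        exact iSup_congr fun n => (key n).symm

end Chain2

section Chain3

variable {σ : Type*} (P : σ → σ → ℝ≥0∞) (R T : Set σ)

lemma reachN_le_reachProb (s : σ) (n : ℕ) : reachN P T s n ≤ reachProb P T s := by
  rw [reachProb_eq_iSup]; exact le_iSup _ n

lemma reachProb_le_one (hP : IsStochastic P) (s : σ) : reachProb P T s ≤ 1 := by
  rw [reachProb_eq_iSup]; exact iSup_le fun n => reachN_le_one P T hP s n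

lemma reachProb_le_of_superharmonic (g : σ → ℝ≥0∞) (hT : ∀ s ∈ T, 1 ≤ g s)
    (hg : ∀ s ∉ T, ∑' s', P s s' * g s' ≤ g s) : ∀ s, reachProb P T s ≤ g s := by
  have key : ∀ n (s : σ), reachN P T s n ≤ g s := by
    intro n
    induction n with
    | zero =>
      intro s
      by_cases hs : s ∈ T
      · rw [reachN_of_mem P T hs]; exact hT s hs
      · rw [reachN_zero_of_not_mem P T hs]; exact zero_le
    | succ n ih =>
      intro s
      by_cases hs : s ∈ T
      · rw [reachN_of_mem P T hs]; exact hT s hs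
      · rw [reachN_succ' P T hs]
        refine le_trans (Summable.tsum_le_tsum (fun s' => ?_) ENNReal.summable ENNReal.summable) (hg s hs)
        exact mul_le_mul_right (ih s') _
  intro s
  rw [reachProb_eq_iSup]
  exact iSup_le fun n => key n s

lemma reachProb_one_step {s : σ} (hs : s ∉ T) :
    reachProb P T s = ∑' s', P s s' * reachProb P T s' := by
  rw [reachProb_eq_iSup]
  have h1 : (⨆ n, reachN P T s n) = ⨆ n, reachN P T s (n + 1) := by
    apply le_antisymm
    · exact iSup_le fun n => le_trans (reachN_mono P T s (by omega : n ≤ n + 1))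
        (le_iSup (fun m => reachN P T s (m + 1)) n)
    · exact iSup_le fun n => le_iSup (fun n => reachN P T s n) (n + 1)
  rw [h1]
  calc ⨆ n, reachN P T s (n + 1)
      = ⨆ n, ∑' s', P s s' * reachN P T s' n := iSup_congr fun n => reachN_succ' P T hs n
    _ = ∑' s', ⨆ n, P s s' * reachN P T s' n :=
        (tsum_iSup_swap (fun n s' => P s s' * reachN P T s' n)
          (fun s' n m hnm => mul_le_mul_right (reachN_mono P T s' hnm) _)).symm
    _ = ∑' s', P s s' * ⨆ n, reachN P T s' n :=
        tsum_congr fun s' => (ENNReal.mul_iSup _ _).symm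
    _ = ∑' s', P s s' * reachProb P T s' :=
        tsum_congr fun s' => by rw [← reachProb_eq_iSup]

lemma surviveProb_add_le (hP : IsStochastic P) :
    ∀ (a b : ℕ) (s : σ),
      surviveProb P R s (a + b) ≤ surviveProb P R s a * ⨆ x, surviveProb P R x b := by
  intro a
  induction a with
  | zero =>
    intro b s
    by_cases hs : s ∈ R
    · rw [surviveProb_of_mem P R hs]; exact zero_le
    · rw [surviveProb_zero' P R hs, one_mul, zero_add]
      exact le_iSup (fun x => surviveProb P R x b) s
  | succ a ih =>
    intro b s
    have harr : a + 1 + b = (a + b) + 1 := by omega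
    rw [harr, surviveProb_succ', surviveProb_succ' (n := a)]
    split_ifs with hs
    · simp
    · calc ∑' s', P s s' * surviveProb P R s' (a + b)
          ≤ ∑' s', P s s' * (surviveProb P R s' a * ⨆ x, surviveProb P R x b) :=
            Summable.tsum_le_tsum (fun s' => mul_le_mul_right (ih b s') _)
              ENNReal.summable ENNReal.summable
        _ = (∑' s', P s s' * surviveProb P R s' a) * ⨆ x, surviveProb P R x b := by
            rw [← ENNReal.tsum_mul_right]
            exact tsum_congr fun s' => (mul_assoc _ _ _).symm

lemma surviveProb_pow (hP : IsStochastic P) {K : ℕ} {θ : ℝ≥0∞}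
    (hθ : ∀ x, surviveProb P R x K ≤ θ) :
    ∀ (m : ℕ) (s : σ), surviveProb P R s (m * K) ≤ θ ^ m := by
  intro m
  induction m with
  | zero =>
    intro s
    rw [zero_mul, pow_zero]
    exact surviveProb_le_one P R hP s 0
  | succ m ih =>
    intro s
    have harr : (m + 1) * K = m * K + K := by ring
    rw [harr, pow_succ]
    calc surviveProb P R s (m * K + K)
        ≤ surviveProb P R s (m * K) * ⨆ x, surviveProb P R x K :=
          surviveProb_add_le P R hP (m * K) K s
      _ ≤ θ ^ m * θ := mul_le_mul' (ih s) (iSup_le hθ)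

lemma decisive_of_uniform (hP : IsStochastic P) {K : ℕ} (hK : 0 < K) {ε : ℝ≥0∞} (hε : 0 < ε)
    (hbound : ∀ x, surviveProb P R x K + ε ≤ 1) :
    ∀ s, reachProb P R s = 1 ∧ expHittingTime P R s < ⊤ := by
  intro s
  have hεtop : ε ≠ ⊤ :=
    ((le_add_self.trans (hbound s)).trans_lt (by simp : (1:ℝ≥0∞) < ⊤)).ne
  have hε1 : ε ≤ 1 := le_add_self.trans (hbound s)
  have hθ : ∀ x, surviveProb P R x K ≤ 1 - ε := fun x =>
    ENNReal.le_sub_of_add_le_right hεtop (hbound x)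
  have hpow : ∀ (m : ℕ) (s : σ), surviveProb P R s (m * K) ≤ (1 - ε) ^ m :=
    surviveProb_pow P R hP hθ
  have hlt : (1 - ε : ℝ≥0∞) < 1 := ENNReal.sub_lt_self (by simp) (by simp) hε.ne'
  constructor
  · refine le_antisymm (reachProb_le_one P R hP s) ?_
    have key : ∀ m : ℕ, (1 : ℝ≥0∞) ≤ reachProb P R s + (1 - ε) ^ m := by
      intro m
      calc (1 : ℝ≥0∞) = reachN P R s (m * K) + surviveProb P R s (m * K) :=
            (reachN_split P R hP (m * K) s).symm
        _ ≤ reachProb P R s + (1 - ε) ^ m :=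
            add_le_add (reachN_le_reachProb P R s _) (hpow m s)
    by_contra hcon
    push_neg at hcon
    have hpos : 0 < 1 - reachProb P R s := tsub_pos_of_lt hcon
    obtain ⟨m, hm⟩ : ∃ m, (1 - ε) ^ m < 1 - reachProb P R s :=
      ((ENNReal.tendsto_pow_atTop_nhds_zero_of_lt_one hlt).eventually_lt_const hpos).exists
    have h2 : reachProb P R s + (1 - ε) ^ m < reachProb P R s + (1 - reachProb P R s) :=
      ENNReal.add_lt_add_left
        (lt_of_le_of_lt (reachProb_le_one P R hP s) (by simp : (1:ℝ≥0∞) < ⊤)).ne hm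
    rw [add_tsub_cancel_of_le hcon.le] at h2
    exact absurd (lt_of_le_of_lt (key m) h2) (lt_irrefl _)
  · unfold expHittingTime
    haveI : NeZero K := ⟨hK.ne'⟩
    have hb : ∀ n : ℕ, surviveProb P R s n ≤ (1 - ε) ^ (n / K) := fun n =>
      le_trans (surviveProb_antitone P R hP s (Nat.div_mul_le_self n K)) (hpow _ s)
    calc ∑' n, surviveProb P R s n
        ≤ ∑' n : ℕ, (1 - ε) ^ (n / K) := Summable.tsum_le_tsum hb ENNReal.summable ENNReal.summable
      _ = ∑' p : ℕ × Fin K, (1 - ε) ^ p.1 :=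
          Equiv.tsum_eq (Nat.divModEquiv K) (fun p : ℕ × Fin K => (1 - ε) ^ p.1)
      _ = ∑' m : ℕ, ∑' _j : Fin K, (1 - ε) ^ m := ENNReal.tsum_prod'
      _ = ∑' m : ℕ, (K : ℝ≥0∞) * (1 - ε) ^ m := tsum_congr fun m => by
            rw [tsum_fintype]
            simp [Finset.sum_const, Finset.card_univ, nsmul_eq_mul]
      _ = (K : ℝ≥0∞) * ∑' m, (1 - ε) ^ m := ENNReal.tsum_mul_left
      _ = (K : ℝ≥0∞) * (1 - (1 - ε))⁻¹ := by rw [ENNReal.tsum_geometric]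
      _ < ⊤ := ENNReal.mul_lt_top (by simp)
          (ENNReal.inv_lt_top.mpr (tsub_pos_of_lt hlt))

end Chain3

section Walk

variable {p : ℝ≥0∞}

lemma walk_stochastic (hp : p ≤ 1) : IsStochastic (walkKernel p) := by
  intro m
  cases m with
  | zero =>
    have h0 : ∀ n : ℕ, walkKernel p 0 n = if n = 0 then 1 else 0 := by
      intro n; unfold walkKernel; rw [if_pos rfl]
    rw [tsum_congr h0, tsum_eq_single 0 (fun b hb => by rw [if_neg hb])]
    simp
  | succ k =>
    have hf : ∀ n : ℕ, n ∉ ({k + 2, k} : Finset ℕ) → walkKernel p (k + 1) n = 0 := by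
      intro n hn
      simp only [Finset.mem_insert, Finset.mem_singleton] at hn
      push_neg at hn
      unfold walkKernel
      rw [if_neg (by omega), if_neg (by omega), if_neg (by omega)]
    rw [tsum_eq_sum hf, Finset.sum_insert (by simp), Finset.sum_singleton]
    have h1 : walkKernel p (k + 1) (k + 2) = p := by
      unfold walkKernel; rw [if_neg (by omega), if_pos rfl]
    have h2 : walkKernel p (k + 1) k = 1 - p := by
      unfold walkKernel; rw [if_neg (by omega), if_neg (by omega), if_pos rfl]
    rw [h1, h2, add_tsub_cancel_of_le hp]

lemma walk_row (g : ℕ → ℝ≥0∞) (k : ℕ) :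
    ∑' n, walkKernel p (k + 1) n * g n = p * g (k + 2) + (1 - p) * g k := by
  have hf : ∀ n : ℕ, n ∉ ({k + 2, k} : Finset ℕ) → walkKernel p (k + 1) n * g n = 0 := by
    intro n hn
    simp only [Finset.mem_insert, Finset.mem_singleton] at hn
    push_neg at hn
    unfold walkKernel
    rw [if_neg (by omega), if_neg (by omega), if_neg (by omega), zero_mul]
  rw [tsum_eq_sum hf, Finset.sum_insert (by simp), Finset.sum_singleton]
  have h1 : walkKernel p (k + 1) (k + 2) = p := by
    unfold walkKernel; rw [if_neg (by omega), if_pos rfl]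
  have h2 : walkKernel p (k + 1) k = 1 - p := by
    unfold walkKernel; rw [if_neg (by omega), if_neg (by omega), if_pos rfl]
  rw [h1, h2]

lemma walk_key (hp0 : p ≠ 0) (hple : p ≤ 1) (j : ℕ) :
    p * ((1 - p) / p) ^ (j + 2) + (1 - p) * ((1 - p) / p) ^ j = ((1 - p) / p) ^ (j + 1) := by
  have hptop : p ≠ ⊤ := (lt_of_le_of_lt hple (by simp)).ne
  have hpr : p * ((1 - p) / p) = 1 - p := ENNReal.mul_div_cancel hp0 hptop
  calc p * ((1 - p) / p) ^ (j + 2) + (1 - p) * ((1 - p) / p) ^ j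
      = p * ((1 - p) / p) ^ (j + 2) + (p * ((1 - p) / p)) * ((1 - p) / p) ^ j := by rw [hpr]
    _ = (p * ((1 - p) / p + 1)) * ((1 - p) / p) ^ (j + 1) := by ring
    _ = ((1 - p) / p) ^ (j + 1) := by
        rw [mul_add, hpr, mul_one, tsub_add_cancel_of_le hple, one_mul]

lemma fwalk_le (hp0 : p ≠ 0) (hple : p ≤ 1) (N₀ : ℕ) (n : ℕ) :
    reachProb (walkKernel p) (Set.Iic N₀) n ≤ ((1 - p) / p) ^ (n - N₀) := by
  refine reachProb_le_of_superharmonic (walkKernel p) (Set.Iic N₀)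
    (fun m => ((1 - p) / p) ^ (m - N₀)) (fun m hm => ?_) (fun m hm => ?_) n
  · show (1 : ℝ≥0∞) ≤ ((1 - p) / p) ^ (m - N₀)
    rw [Nat.sub_eq_zero_of_le hm, pow_zero]
  · show ∑' s', walkKernel p m s' * ((1 - p) / p) ^ (s' - N₀) ≤ ((1 - p) / p) ^ (m - N₀)
    simp only [Set.mem_Iic, not_le] at hm
    obtain ⟨k, rfl⟩ : ∃ k, m = k + 1 := ⟨m - 1, by omega⟩
    have hk : N₀ ≤ k := by omega
    rw [walk_row]
    have e1 : k + 2 - N₀ = (k - N₀) + 2 := by omega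
    have e2 : k + 1 - N₀ = (k - N₀) + 1 := by omega
    rw [e1, e2]
    exact le_of_eq (walk_key hp0 hple (k - N₀))


lemma fwalk_rec (hp0 : p ≠ 0) (hple : p ≤ 1) (N₀ m : ℕ) :
    reachProb (walkKernel p) (Set.Iic N₀) (N₀ + m + 1)
      = p * reachProb (walkKernel p) (Set.Iic N₀) (N₀ + m + 2)
        + (1 - p) * reachProb (walkKernel p) (Set.Iic N₀) (N₀ + m) := by
  have hs : (N₀ + m + 1 : ℕ) ∉ Set.Iic N₀ := by
    intro h; simp only [Set.mem_Iic] at h; omega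
  rw [reachProb_one_step (walkKernel p) (Set.Iic N₀) hs]
  exact walk_row _ (N₀ + m)

lemma fwalk_eq (hp1 : 1 / 2 < p) (hplt : p < 1) (N₀ : ℕ) (m : ℕ) :
    reachProb (walkKernel p) (Set.Iic N₀) (N₀ + m) = ((1 - p) / p) ^ m := by
  have hple : p ≤ 1 := hplt.le
  have hptop : p ≠ ⊤ := (lt_of_le_of_lt hple (by simp)).ne
  have hp0 : p ≠ 0 := by
    intro h; rw [h] at hp1
    exact absurd hp1 (by simp)
  have hstoch := walk_stochastic hple
  set r : ℝ≥0∞ := (1 - p) / p with hr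
  have hrtop : r ≠ ⊤ := by
    rw [hr]; exact (ENNReal.div_lt_top (by simp) hp0).ne
  -- real versions
  set pr : ℝ := p.toReal with hpr
  have hpr1 : pr < 1 := by
    rw [hpr, ← ENNReal.toReal_one]
    exact (ENNReal.toReal_lt_toReal hptop (by simp)).mpr hplt
  have hpr2 : 1 / 2 < pr := by
    have h := (ENNReal.toReal_lt_toReal (by simp : (1/2 : ℝ≥0∞) ≠ ⊤) hptop).mpr hp1
    have h2 : ((1 : ℝ≥0∞) / 2).toReal = (1 : ℝ) / 2 := by
      rw [ENNReal.toReal_div]; simp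
    rw [h2] at h
    exact h
  have hprpos : 0 < pr := by linarith
  have hsub : (1 - p).toReal = 1 - pr := by
    rw [ENNReal.toReal_sub_of_le hple (by simp)]; simp [hpr]
  set rr : ℝ := (1 - pr) / pr with hrr
  have hrreq : r.toReal = rr := by
    rw [hr, ENNReal.toReal_div, hsub, hrr, hpr]
  have hrrpos : 0 ≤ rr := by
    rw [hrr]; apply div_nonneg <;> linarith
  have hrrlt : rr < 1 := by
    rw [hrr, div_lt_one hprpos]; linarith
  have hreach_le_one : ∀ n : ℕ, reachProb (walkKernel p) (Set.Iic N₀) n ≤ 1 :=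
    fun n => reachProb_le_one _ _ hstoch n
  have hfin : ∀ n : ℕ, reachProb (walkKernel p) (Set.Iic N₀) n ≠ ⊤ :=
    fun n => (lt_of_le_of_lt (hreach_le_one n) (by simp)).ne
  set A : ℕ → ℝ := fun j => (reachProb (walkKernel p) (Set.Iic N₀) (N₀ + j)).toReal with hA
  have hA0 : A 0 = 1 := by
    rw [hA]
    simp only [Nat.add_zero]
    rw [reachProb_of_mem _ _ (by simp : N₀ ∈ Set.Iic N₀)]
    simp
  have hAnn : ∀ j, 0 ≤ A j := fun j => ENNReal.toReal_nonneg
  have hAle : ∀ j, A j ≤ rr ^ j := by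
    intro j
    have h1 := fwalk_le hp0 hple N₀ (N₀ + j)
    have h2 : N₀ + j - N₀ = j := by omega
    rw [h2] at h1
    have h3 := ENNReal.toReal_mono (ENNReal.pow_ne_top hrtop) h1
    rw [ENNReal.toReal_pow, hrreq] at h3
    exact h3
  have hArec : ∀ j, A (j + 1) = pr * A (j + 2) + (1 - pr) * A j := by
    intro j
    have h1 := fwalk_rec hp0 hple N₀ j
    have h2 : (N₀ + j + 1) = N₀ + (j + 1) := by omega
    have h3 : (N₀ + j + 2) = N₀ + (j + 2) := by omega
    rw [h2, h3] at h1
    have h4 := congrArg ENNReal.toReal h1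
    rw [ENNReal.toReal_add (ENNReal.mul_ne_top hptop (hfin _))
      (ENNReal.mul_ne_top (by simp : (1 - p) ≠ ⊤) (hfin _)),
      ENNReal.toReal_mul, ENNReal.toReal_mul, hsub] at h4
    exact h4
  -- the deficiency sequence
  set B : ℕ → ℝ := fun j => rr ^ j - A j with hB
  have hB0 : B 0 = 0 := by rw [hB]; simp [hA0]
  have hrrid : 1 - pr = pr * rr := by
    rw [hrr]; field_simp
  have hBrec : ∀ j, B (j + 1) = pr * B (j + 2) + (1 - pr) * B j := by
    intro j
    have hpow : rr ^ (j + 1) = pr * rr ^ (j + 2) + (1 - pr) * rr ^ j := by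
      have h1 : (1 - pr) * rr ^ j = pr * rr * rr ^ j := by rw [hrrid]
      rw [h1]
      have h2 : pr * rr ^ (j + 2) + pr * rr * rr ^ j = (pr * rr + pr) * rr ^ (j + 1) := by ring
      rw [h2]
      have h3 : pr * rr + pr = 1 := by rw [← hrrid]; ring
      rw [h3, one_mul]
    rw [hB]
    simp only
    rw [hpow, hArec j]
    ring
  clear_value A B pr rr
  have hBform : ∀ j, B j * (1 - rr) = B 1 * (1 - rr ^ j) := by
    intro j
    induction j using Nat.strong_induction_on with
    | _ j ih =>
      match j with
      | 0 => rw [hB0]; simp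
      | 1 => rw [pow_one]
      | (m + 2) =>
        have ih1 := ih (m + 1) (by omega)
        have ih0 := ih m (by omega)
        have hrec := hBrec m
        have hgoal : pr * (B (m + 2) * (1 - rr)) = pr * (B 1 * (1 - rr ^ (m + 2))) := by
          have e1 : pr * (B (m + 2) * (1 - rr)) = (B (m+1) - (1 - pr) * B m) * (1 - rr) := by
            rw [hrec]; ring
          rw [e1]
          have e2 : (B (m+1) - (1 - pr) * B m) * (1 - rr)
              = B (m+1) * (1 - rr) - (1 - pr) * (B m * (1 - rr)) := by ring
          rw [e2, ih1, ih0]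
          linear_combination (B 1 * rr ^ m * (1 - rr)) * hrrid
        have := mul_left_cancel₀ (by linarith : pr ≠ 0) hgoal
        exact this
  have hB1 : B 1 = 0 := by
    have hub : ∀ j, B 1 * (1 - rr ^ j) ≤ rr ^ j * (1 - rr) := by
      intro j
      rw [← hBform j]
      have : B j ≤ rr ^ j := by simp only [hB]; linarith [hAnn j]
      nlinarith [hrrlt, hrrpos]
    have h1 : Filter.Tendsto (fun j : ℕ => rr ^ j) Filter.atTop (nhds 0) :=
      tendsto_pow_atTop_nhds_zero_of_lt_one hrrpos hrrlt
    have h2 : Filter.Tendsto (fun j : ℕ => B 1 * (1 - rr ^ j)) Filter.atTop (nhds (B 1)) := by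
      have := ((tendsto_const_nhds (x := (1:ℝ))).sub h1).const_mul (B 1)
      simpa using this
    have h3 : Filter.Tendsto (fun j : ℕ => rr ^ j * (1 - rr)) Filter.atTop (nhds 0) := by
      have := h1.mul_const (1 - rr)
      simpa using this
    have h4 : B 1 ≤ 0 := le_of_tendsto_of_tendsto' h2 h3 hub
    have h5 : 0 ≤ B 1 := by
      have := hAle 1
      simp only [hB]; linarith
    linarith
  have hBzero : ∀ j, B j = 0 := by
    intro j
    have := hBform j
    rw [hB1] at this
    simp only [zero_mul] at this
    have hne : (1 : ℝ) - rr ≠ 0 := by linarith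
    exact (mul_eq_zero.mp this).resolve_right hne
  have hAval : A m = rr ^ m := by
    have := hBzero m
    simp only [hB] at this
    linarith
  -- back to ENNReal
  have hfin2 : r ^ m ≠ ⊤ := ENNReal.pow_ne_top hrtop
  refine (ENNReal.toReal_eq_toReal_iff' (hfin _) hfin2).mp ?_
  rw [ENNReal.toReal_pow, hrreq]
  have hAm : A m = (reachProb (walkKernel p) (Set.Iic N₀) (N₀ + m)).toReal := by
    simp only [hA]
  rw [← hAm]
  exact hAval

end Walk

section Helpers

variable {σ : Type*}

lemma tsum_ite_subtype (C : σ → Prop) [DecidablePred C] (g : σ → ℝ≥0∞) :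
    ∑' s', (if C s' then g s' else 0) = ∑' s' : {s' // C s'}, g s'.val := by
  have h1 : ∑' s' : {s' : σ // C s'}, g s'.val = ∑' s', Set.indicator {s' | C s'} g s' :=
    tsum_subtype {s' | C s'} g
  rw [h1]
  refine tsum_congr fun s' => ?_
  by_cases h : C s' <;> simp [Set.indicator_apply, h]

lemma tsum_level_partition (g : σ → ℝ≥0∞) (lam : σ → ℕ) (L : ℕ) :
    ∑' s', g s' = (∑' s' : {s' : σ // lam s' = L}, g s'.val)
      + (∑' s' : {s' : σ // lam s' + 1 = L}, g s'.val)
      + (∑' s' : {s' : σ // L < lam s'}, g s'.val)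
      + (∑' s' : {s' : σ // lam s' + 1 < L}, g s'.val) := by
  have h1 : ∀ s', g s' = (if lam s' = L then g s' else 0) + (if lam s' + 1 = L then g s' else 0)
      + (if L < lam s' then g s' else 0) + (if lam s' + 1 < L then g s' else 0) := by
    intro s'
    by_cases ha : lam s' = L
    · rw [if_pos ha, if_neg (by omega), if_neg (by omega), if_neg (by omega)]; ring
    · by_cases hb : lam s' + 1 = L
      · rw [if_neg ha, if_pos hb, if_neg (by omega), if_neg (by omega)]; ring
      · by_cases hcc : L < lam s'
        · rw [if_neg ha, if_neg hb, if_pos hcc, if_neg (by omega)]; ring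
        · rw [if_neg ha, if_neg hb, if_neg hcc, if_pos (by omega)]; ring
  have e1 := tsum_ite_subtype (fun s' => lam s' = L) g
  have e2 := tsum_ite_subtype (fun s' => lam s' + 1 = L) g
  have e3 := tsum_ite_subtype (fun s' => L < lam s') g
  have e4 := tsum_ite_subtype (fun s' => lam s' + 1 < L) g
  rw [tsum_congr h1, ENNReal.tsum_add, ENNReal.tsum_add, ENNReal.tsum_add, e1, e2, e3, e4]

lemma fhp_truncate (P : σ → σ → ℝ≥0∞) (hPle : ∀ a b, P a b ≤ 1) {T R' : Set σ} (hTR : T ⊆ R') :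
    ∀ l : List σ, ∀ x : σ, l.head? = some x → (∃ h : l ≠ [], l.getLast h ∈ T) →
      ∃ l' : List σ, FirstHitPath R' x l' ∧ l'.head? = some x ∧ pathProb P l ≤ pathProb P l' := by
  intro l
  induction l with
  | nil => intro x h hlast; simp at h
  | cons a t ih =>
    intro x hh hlast
    simp only [List.head?_cons, Option.some.injEq] at hh; subst hh
    by_cases hx : a ∈ R'
    · exact ⟨[a], fhp_self R' hx, rfl, pathProb_le_one hPle _⟩
    · cases t with
      | nil =>
        obtain ⟨h1, h2⟩ := hlast
        simp only [List.getLast_singleton] at h2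
        exact absurd (hTR h2) hx
      | cons b u =>
        obtain ⟨h1, h2⟩ := hlast
        have hlast' : ∃ h : (b :: u) ≠ [], (b :: u).getLast h ∈ T :=
          ⟨List.cons_ne_nil _ _, by rwa [List.getLast_cons (List.cons_ne_nil _ _)] at h2⟩
        obtain ⟨l', hfhp, hhead, hpp⟩ := ih b rfl hlast'
        have hne' : l' ≠ [] := fhp_ne_nil R' hfhp
        have hhb : l'.head hne' = b := by
          have := List.head?_eq_head hne'; rw [hhead] at this
          exact (Option.some.inj this).symm
        refine ⟨a :: l', ?_, rfl, ?_⟩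
        · refine (fhp_cons_iff R' l' hx hne').mpr ?_
          rw [hhb]; exact hfhp
        · have hstep : pathProb P (a :: l') = P a b * pathProb P l' := by
            rw [← eq_cons_tail hhead]
            exact pathProb_cons' a b _
          rw [pathProb_cons', hstep]
          exact mul_le_mul_right hpp _

lemma truncate_exists (P : σ → σ → ℝ≥0∞) (hPle : ∀ a b, P a b ≤ 1) {T R' : Set σ}
    (hTR : T ⊆ R') {x : σ} (hx : reachProb P T x ≠ 0) :
    ∃ l' : List σ, FirstHitPath R' x l' ∧ 0 < pathProb P l' := by
  unfold reachProb at hx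
  have hex : ∃ l : {l : List σ // FirstHitPath T x l}, pathProb P l.val ≠ 0 := by
    by_contra hcon
    push_neg at hcon
    exact hx (ENNReal.tsum_eq_zero.mpr hcon)
  obtain ⟨⟨l, hl⟩, hpp⟩ := hex
  obtain ⟨l', h1, h2, h3⟩ := fhp_truncate P hPle hTR l x hl.1
    (by obtain ⟨h1', hne, hlast, -⟩ := hl; exact ⟨hne, hlast⟩)
  exact ⟨l', h1, lt_of_lt_of_le (pos_iff_ne_zero.mpr hpp) h3⟩

lemma survive_le_of_fhp (P : σ → σ → ℝ≥0∞) (hP : IsStochastic P) {R' : Set σ} {x : σ}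
    {l' : List σ} (h : FirstHitPath R' x l') :
    ∀ m, l'.length ≤ m + 1 → surviveProb P R' x m + pathProb P l' ≤ 1 := by
  intro m hm
  have h1 : pathProb P l' ≤ reachN P R' x m :=
    ENNReal.le_tsum (⟨l', h, hm⟩ : {l : List σ // FirstHitPath R' x l ∧ l.length ≤ m + 1})
  calc surviveProb P R' x m + pathProb P l' ≤ surviveProb P R' x m + reachN P R' x m :=
        add_le_add_right h1 _
    _ = 1 := by rw [add_comm]; exact reachN_split P R' hP m x

lemma core_real (pr pp ρ cc e d u δt : ℝ)
    (hpr : 1/2 < pr) (hpr1 : pr < 1) (hppr : pr < pp) (hpp1 : pp ≤ 1)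
    (hρ : ρ = (1 - pr)/pr)
    (hcc : 0 < cc) (hccu : cc ≤ u)
    (he : 0 ≤ e) (hd : 0 ≤ d) (hu : 0 ≤ u)
    (hsum : e + d + u = 1)
    (hdiv : pp * (d + u) ≤ u)
    (hδt : δt ≤ cc * (2*pr - 1) * (pp - pr) / (pr * (1 - pr))) (hδt0 : 0 ≤ δt) :
    e * ρ + d + u * ρ^2 + δt * ρ ≤ ρ := by
  have hρpos : 0 < ρ := by rw [hρ]; apply div_pos <;> linarith
  have hρlt1 : ρ < 1 := by rw [hρ, div_lt_one (by linarith)]; linarith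
  set ν : ℝ := (2*pr - 1) * (pp - pr) / (pr * (1 - pr)) with hν
  have hνpos : 0 < ν := by
    rw [hν]; apply div_pos
    · nlinarith
    · nlinarith
  have hd2 : d ≤ (1 - pp) * (d + u) := by nlinarith
  have hident : (1 - pp) * (1 - ρ^2) + ν * ρ = ρ - ρ^2 := by
    rw [hν, hρ]
    have h1 : pr ≠ 0 := by linarith
    have h2 : 1 - pr ≠ 0 := by linarith
    field_simp
    ring
  have hδt2 : δt ≤ cc * ν := by
    rw [hν]
    calc δt ≤ cc * (2*pr - 1) * (pp - pr) / (pr * (1 - pr)) := hδt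
      _ = cc * ((2*pr - 1) * (pp - pr) / (pr * (1 - pr))) := by ring
  have step1 : δt * ρ ≤ (d + u) * (ν * ρ) := by
    calc δt * ρ ≤ (cc * ν) * ρ := mul_le_mul_of_nonneg_right hδt2 hρpos.le
      _ ≤ ((d + u) * ν) * ρ := by
          have hcd : cc ≤ d + u := by linarith
          exact mul_le_mul_of_nonneg_right
            (mul_le_mul_of_nonneg_right hcd hνpos.le) hρpos.le
      _ = (d + u) * (ν * ρ) := by ring
  have step2 : d * (1 - ρ^2) ≤ (1 - pp) * (d + u) * (1 - ρ^2) :=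
    mul_le_mul_of_nonneg_right hd2 (by nlinarith)
  have comb : e * ρ + d + u * ρ^2 + δt * ρ
      ≤ e * ρ + (1 - pp) * (d + u) * (1 - ρ^2) + (d + u) * ρ^2 + (d + u) * (ν * ρ) := by
    nlinarith [step1, step2]
  have comb2 : e * ρ + (1 - pp) * (d + u) * (1 - ρ^2) + (d + u) * ρ^2 + (d + u) * (ν * ρ)
      = e * ρ + (d + u) * ρ := by
    linear_combination (d + u) * hident
  have comb3 : e * ρ + (d + u) * ρ = ρ := by linear_combination ρ * hsum
  linarith

end Helpers

open scoped Classical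

section Thms

variable {S : Type*}

theorem stmt15 [Countable S] (P : S → S → ℝ≥0∞) (hP : IsStochastic P)
    (lam : S → ℕ) (hlmc : IsLMC P lam)
    (pplus p : ℝ≥0∞) (N₀ : ℕ) (hdiv : Divergent P lam pplus N₀)
    (hple : pplus ≤ 1) (hp1 : 1/2 < p) (hp2 : p < pplus)
    (c : ℝ≥0∞) (hc : 0 < c) (hinf : ∀ s : S, N₀ < lam s → c ≤ Pup P lam s) :
    ∀ T : Set S, T ⊆ {s : S | lam s ≤ N₀} →
      let F : Set S := {s : S | lam s ≤ N₀}
      let bk := biasedKernel P F (walkKernel p) (Set.Iic N₀)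
        (fun s => lam s.val)
      let T' : Set (Option (SA P F)) :=
        {y | ∃ u : SA P F, y = some u ∧ u.val ∈ T}
      ∀ x, reachProb bk (T' ∪ Av bk T') x = 1 ∧
        expHittingTime bk (T' ∪ Av bk T') x < ⊤ := by
  intro T hTsub
  intro F bk T'
  set R : Set (Option (SA P F)) := T' ∪ Av bk T' with hRdef
  -- p basics
  have hplt : p < 1 := lt_of_lt_of_le hp2 hple
  have hple1 : p ≤ 1 := hplt.le
  have hptop : p ≠ ⊤ := (lt_of_le_of_lt hple1 (by simp)).ne
  have hpptop : pplus ≠ ⊤ := (lt_of_le_of_lt hple (by simp)).ne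
  have hp0 : p ≠ 0 := by
    intro h; rw [h] at hp1; exact absurd hp1 (by simp)
  have h1p0 : (1 : ℝ≥0∞) - p ≠ 0 := by
    simp only [ne_eq, tsub_eq_zero_iff_le, not_le]; exact hplt
  have hr0 : ((1 : ℝ≥0∞) - p) / p ≠ 0 := by
    simp only [ne_eq, ENNReal.div_eq_zero_iff, not_or]
    exact ⟨h1p0, hptop⟩
  have hrtop : ((1 : ℝ≥0∞) - p) / p ≠ ⊤ := (ENNReal.div_lt_top (by simp) hp0).ne
  have hrle1 : ((1 : ℝ≥0∞) - p) / p ≤ 1 := by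
    refine ENNReal.div_le_of_le_mul ?_
    rw [one_mul]
    have h2 : (1 : ℝ≥0∞) < p * 2 :=
      (ENNReal.div_lt_iff (Or.inl (by norm_num)) (Or.inl (by norm_num))).mp hp1
    rw [tsub_le_iff_right]
    calc (1 : ℝ≥0∞) ≤ p * 2 := h2.le
      _ = p + p := by ring
  -- the walk
  have hstochW : IsStochastic (walkKernel p) := walk_stochastic hple1
  have hfw_le1 : ∀ n : ℕ, reachProb (walkKernel p) (Set.Iic N₀) n ≤ 1 :=
    fun n => reachProb_le_one _ _ hstochW n
  have hfw_top : ∀ n : ℕ, reachProb (walkKernel p) (Set.Iic N₀) n ≠ ⊤ :=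
    fun n => (lt_of_le_of_lt (hfw_le1 n) (by simp)).ne
  have hfw_one : ∀ n : ℕ, n ≤ N₀ → reachProb (walkKernel p) (Set.Iic N₀) n = 1 :=
    fun n h => reachProb_of_mem _ _ h
  have hfw_eq : ∀ n : ℕ, N₀ ≤ n →
      reachProb (walkKernel p) (Set.Iic N₀) n = (((1 : ℝ≥0∞) - p) / p) ^ (n - N₀) := by
    intro n h
    obtain ⟨m, rfl⟩ : ∃ m, n = N₀ + m := ⟨n - N₀, by omega⟩
    rw [show N₀ + m - N₀ = m from by omega]
    exact fwalk_eq hp1 hplt N₀ m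
  have hfw_pos : ∀ n : ℕ, reachProb (walkKernel p) (Set.Iic N₀) n ≠ 0 := by
    intro n
    rcases le_or_gt n N₀ with h | h
    · rw [hfw_one n h]; simp
    · rw [hfw_eq n h.le]; exact pow_ne_zero _ hr0
  -- real constants
  have hpr1 : p.toReal < 1 := by
    rw [← ENNReal.toReal_one]; exact (ENNReal.toReal_lt_toReal hptop (by simp)).mpr hplt
  have hpr2 : 1 / 2 < p.toReal := by
    have h := (ENNReal.toReal_lt_toReal (by simp : (1/2 : ℝ≥0∞) ≠ ⊤) hptop).mpr hp1
    have h2 : ((1 : ℝ≥0∞) / 2).toReal = (1 : ℝ) / 2 := by rw [ENNReal.toReal_div]; simp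
    rw [h2] at h; exact h
  have hprpos : 0 < p.toReal := by linarith
  have hppr : p.toReal < pplus.toReal := (ENNReal.toReal_lt_toReal hptop hpptop).mpr hp2
  have hpp1 : pplus.toReal ≤ 1 := by
    rw [← ENNReal.toReal_one]; exact ENNReal.toReal_mono (by simp) hple
  have hsubr : ((1 : ℝ≥0∞) - p).toReal = 1 - p.toReal := by
    rw [ENNReal.toReal_sub_of_le hple1 (by simp)]; simp
  have hρeq : (((1 : ℝ≥0∞) - p) / p).toReal = (1 - p.toReal) / p.toReal := by
    rw [ENNReal.toReal_div, hsubr]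
  -- c cap
  have hcpos : 0 < min c 1 := lt_min hc one_pos
  have hctop : min c 1 ≠ ⊤ := (lt_of_le_of_lt (min_le_right _ _) (by simp)).ne
  have hccpos : 0 < (min c 1).toReal := ENNReal.toReal_pos hcpos.ne' hctop
  -- δ
  have hδrpos : 0 < (min c 1).toReal * (2 * p.toReal - 1) * (pplus.toReal - p.toReal)
      / (p.toReal * (1 - p.toReal)) := by
    apply div_pos
    · apply mul_pos (mul_pos hccpos (by linarith)) (by linarith)
    · apply mul_pos hprpos (by linarith)
  set δ : ℝ≥0∞ := min (ENNReal.ofReal ((min c 1).toReal * (2 * p.toReal - 1) *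
    (pplus.toReal - p.toReal) / (p.toReal * (1 - p.toReal)))) 1 with hδdef
  have hδpos : 0 < δ := lt_min (ENNReal.ofReal_pos.mpr hδrpos) one_pos
  have hδ1 : δ ≤ 1 := min_le_right _ _
  have hδtop : δ ≠ ⊤ := (lt_of_le_of_lt hδ1 (by simp)).ne
  have hδle : δ.toReal ≤ (min c 1).toReal * (2 * p.toReal - 1) * (pplus.toReal - p.toReal)
      / (p.toReal * (1 - p.toReal)) := by
    calc δ.toReal ≤ (ENNReal.ofReal ((min c 1).toReal * (2 * p.toReal - 1) *
          (pplus.toReal - p.toReal) / (p.toReal * (1 - p.toReal)))).toReal :=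
          ENNReal.toReal_mono ENNReal.ofReal_ne_top (min_le_left _ _)
      _ = _ := ENNReal.toReal_ofReal hδrpos.le
  -- core bound for high states
  have hhigh : ∀ s : SA P F, N₀ < lam s.val →
      (∑' s' : SA P F, P s.val s'.val * reachProb (walkKernel p) (Set.Iic N₀) (lam s'.val))
        + δ * reachProb (walkKernel p) (Set.Iic N₀) (lam s.val)
        ≤ reachProb (walkKernel p) (Set.Iic N₀) (lam s.val) := by
    intro s hs
    have hrow := tsum_level_partition (fun s' => P s.val s') lam (lam s.val)
    have hzero0 : (∑' s' : {s' : S // lam s' + 1 < lam s.val}, P s.val s'.val) = 0 := by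
      rw [ENNReal.tsum_eq_zero]
      rintro ⟨s', hs'⟩
      by_contra hpos
      have h2 := hlmc.1 s.val s' (pos_iff_ne_zero.mpr hpos)
      omega
    have hsum1 : Peq P lam s.val + Pdown P lam s.val + Pup P lam s.val = 1 := by
      have h3 := hP s.val
      rw [hrow, hzero0, add_zero] at h3
      exact h3
    have hPeq_le : Peq P lam s.val ≤ 1 := by
      calc Peq P lam s.val ≤ Peq P lam s.val + Pdown P lam s.val := le_self_add
        _ ≤ Peq P lam s.val + Pdown P lam s.val + Pup P lam s.val := le_self_add
        _ = 1 := hsum1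
    have hPdown_le : Pdown P lam s.val ≤ 1 := by
      calc Pdown P lam s.val ≤ Peq P lam s.val + Pdown P lam s.val := le_add_self
        _ ≤ Peq P lam s.val + Pdown P lam s.val + Pup P lam s.val := le_self_add
        _ = 1 := hsum1
    have hPup_le : Pup P lam s.val ≤ 1 := by
      calc Pup P lam s.val ≤ Peq P lam s.val + Pdown P lam s.val + Pup P lam s.val := le_add_self
        _ = 1 := hsum1
    have hPe_top : Peq P lam s.val ≠ ⊤ := (lt_of_le_of_lt hPeq_le (by simp)).ne
    have hPd_top : Pdown P lam s.val ≠ ⊤ := (lt_of_le_of_lt hPdown_le (by simp)).ne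
    have hPu_top : Pup P lam s.val ≠ ⊤ := (lt_of_le_of_lt hPup_le (by simp)).ne
    have hPup_c : min c 1 ≤ Pup P lam s.val := le_trans (min_le_left _ _) (hinf s.val hs)
    have hDU0 : Pdown P lam s.val + Pup P lam s.val ≠ 0 := by
      intro h
      have h2 : Pup P lam s.val = 0 := (add_eq_zero.mp h).2
      rw [h2] at hPup_c
      exact hcpos.ne' (le_antisymm hPup_c (zero_le))
    have hDUle : Pdown P lam s.val + Pup P lam s.val ≤ 1 := by
      calc Pdown P lam s.val + Pup P lam s.val
          ≤ Peq P lam s.val + (Pdown P lam s.val + Pup P lam s.val) := le_add_self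
        _ = Peq P lam s.val + Pdown P lam s.val + Pup P lam s.val := (add_assoc _ _ _).symm
        _ = 1 := hsum1
    have hDUtop : Pdown P lam s.val + Pup P lam s.val ≠ ⊤ :=
      (lt_of_le_of_lt hDUle (by simp)).ne
    have hPeq_lt : Peq P lam s.val < 1 := by
      refine lt_of_le_of_ne hPeq_le ?_
      intro h
      rw [h] at hsum1
      have h4 : (1 : ℝ≥0∞) + (Pdown P lam s.val + Pup P lam s.val) = 1 + 0 := by
        rw [← add_assoc, hsum1, add_zero]
      exact hDU0 ((ENNReal.add_right_inj (by simp)).mp h4)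
    have hdivq := hdiv.2 s.val hs hPeq_lt
    have hmul : pplus * (Pdown P lam s.val + Pup P lam s.val) ≤ Pup P lam s.val :=
      (ENNReal.le_div_iff_mul_le (Or.inl hDU0) (Or.inl hDUtop)).mp hdivq
    -- bound on the numerator
    have hnum : (∑' s' : SA P F, P s.val s'.val * reachProb (walkKernel p) (Set.Iic N₀) (lam s'.val))
        ≤ Peq P lam s.val * (((1:ℝ≥0∞) - p)/p) ^ (lam s.val - N₀)
          + Pdown P lam s.val * (((1:ℝ≥0∞) - p)/p) ^ (lam s.val - N₀ - 1)
          + Pup P lam s.val * (((1:ℝ≥0∞) - p)/p) ^ (lam s.val - N₀ + 1) := by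
      have hstep1 : (∑' s' : SA P F, P s.val s'.val * reachProb (walkKernel p) (Set.Iic N₀) (lam s'.val))
          ≤ ∑' s' : S, P s.val s' * reachProb (walkKernel p) (Set.Iic N₀) (lam s') :=
        ENNReal.tsum_comp_le_tsum_of_injective Subtype.val_injective _
      refine hstep1.trans ?_
      rw [tsum_level_partition
        (fun s' => P s.val s' * reachProb (walkKernel p) (Set.Iic N₀) (lam s')) lam (lam s.val)]
      have hpart4 : (∑' s' : {s' : S // lam s' + 1 < lam s.val},
          P s.val s'.val * reachProb (walkKernel p) (Set.Iic N₀) (lam s'.val)) = 0 := by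
        rw [ENNReal.tsum_eq_zero]
        rintro ⟨s', hs'⟩
        have hz : P s.val s' = 0 := by
          by_contra hpos
          have h2 := hlmc.1 s.val s' (pos_iff_ne_zero.mpr hpos)
          omega
        show P s.val s' * _ = 0
        rw [hz, zero_mul]
      have hpart1 : (∑' s' : {s' : S // lam s' = lam s.val},
          P s.val s'.val * reachProb (walkKernel p) (Set.Iic N₀) (lam s'.val))
          = Peq P lam s.val * (((1:ℝ≥0∞) - p)/p) ^ (lam s.val - N₀) := by
        calc (∑' s' : {s' : S // lam s' = lam s.val},
            P s.val s'.val * reachProb (walkKernel p) (Set.Iic N₀) (lam s'.val))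
            = ∑' s' : {s' : S // lam s' = lam s.val},
              P s.val s'.val * (((1:ℝ≥0∞) - p)/p) ^ (lam s.val - N₀) := by
              refine tsum_congr fun x => ?_
              obtain ⟨s', h⟩ := x
              show P s.val s' * reachProb (walkKernel p) (Set.Iic N₀) (lam s') = _
              rw [h, hfw_eq _ (le_of_lt hs)]
          _ = Peq P lam s.val * (((1:ℝ≥0∞) - p)/p) ^ (lam s.val - N₀) := ENNReal.tsum_mul_right
      have hpart2 : (∑' s' : {s' : S // lam s' + 1 = lam s.val},
          P s.val s'.val * reachProb (walkKernel p) (Set.Iic N₀) (lam s'.val))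
          = Pdown P lam s.val * (((1:ℝ≥0∞) - p)/p) ^ (lam s.val - N₀ - 1) := by
        calc (∑' s' : {s' : S // lam s' + 1 = lam s.val},
            P s.val s'.val * reachProb (walkKernel p) (Set.Iic N₀) (lam s'.val))
            = ∑' s' : {s' : S // lam s' + 1 = lam s.val},
              P s.val s'.val * (((1:ℝ≥0∞) - p)/p) ^ (lam s.val - N₀ - 1) := by
              refine tsum_congr fun x => ?_
              obtain ⟨s', h⟩ := x
              show P s.val s' * reachProb (walkKernel p) (Set.Iic N₀) (lam s') = _
              rw [hfw_eq _ (by omega), show lam s' - N₀ = lam s.val - N₀ - 1 from by omega]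
          _ = Pdown P lam s.val * (((1:ℝ≥0∞) - p)/p) ^ (lam s.val - N₀ - 1) :=
            ENNReal.tsum_mul_right
      have hpart3 : (∑' s' : {s' : S // lam s.val < lam s'},
          P s.val s'.val * reachProb (walkKernel p) (Set.Iic N₀) (lam s'.val))
          ≤ Pup P lam s.val * (((1:ℝ≥0∞) - p)/p) ^ (lam s.val - N₀ + 1) := by
        calc (∑' s' : {s' : S // lam s.val < lam s'},
            P s.val s'.val * reachProb (walkKernel p) (Set.Iic N₀) (lam s'.val))
            ≤ ∑' s' : {s' : S // lam s.val < lam s'},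
              P s.val s'.val * (((1:ℝ≥0∞) - p)/p) ^ (lam s.val - N₀ + 1) := by
              refine Summable.tsum_le_tsum (fun x => ?_) ENNReal.summable ENNReal.summable
              obtain ⟨s', h⟩ := x
              show P s.val s' * reachProb (walkKernel p) (Set.Iic N₀) (lam s') ≤ _
              refine mul_le_mul_right ?_ _
              rw [hfw_eq _ (by omega)]
              exact pow_le_pow_of_le_one (zero_le) hrle1 (by omega)
          _ = Pup P lam s.val * (((1:ℝ≥0∞) - p)/p) ^ (lam s.val - N₀ + 1) :=
            ENNReal.tsum_mul_right
      rw [hpart4, add_zero, hpart1, hpart2]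
      exact add_le_add_right hpart3 _
    -- scalar inequality
    have hscalar : Peq P lam s.val * (((1:ℝ≥0∞) - p)/p) + Pdown P lam s.val
        + Pup P lam s.val * (((1:ℝ≥0∞) - p)/p) ^ 2 + δ * (((1:ℝ≥0∞) - p)/p)
        ≤ ((1:ℝ≥0∞) - p)/p := by
      have hLtop : Peq P lam s.val * (((1:ℝ≥0∞) - p)/p) + Pdown P lam s.val
          + Pup P lam s.val * (((1:ℝ≥0∞) - p)/p) ^ 2 + δ * (((1:ℝ≥0∞) - p)/p) ≠ ⊤ := by
        refine ENNReal.add_ne_top.mpr ⟨ENNReal.add_ne_top.mpr ⟨ENNReal.add_ne_top.mpr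
          ⟨ENNReal.mul_ne_top hPe_top hrtop, hPd_top⟩,
          ENNReal.mul_ne_top hPu_top (ENNReal.pow_ne_top hrtop)⟩,
          ENNReal.mul_ne_top hδtop hrtop⟩
      refine (ENNReal.toReal_le_toReal hLtop hrtop).mp ?_
      have hexp : (Peq P lam s.val * (((1:ℝ≥0∞) - p)/p) + Pdown P lam s.val
          + Pup P lam s.val * (((1:ℝ≥0∞) - p)/p) ^ 2 + δ * (((1:ℝ≥0∞) - p)/p)).toReal
          = (Peq P lam s.val).toReal * ((((1:ℝ≥0∞) - p)/p)).toReal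
            + (Pdown P lam s.val).toReal
            + (Pup P lam s.val).toReal * ((((1:ℝ≥0∞) - p)/p)).toReal ^ 2
            + δ.toReal * ((((1:ℝ≥0∞) - p)/p)).toReal := by
        rw [ENNReal.toReal_add (ENNReal.add_ne_top.mpr ⟨ENNReal.add_ne_top.mpr
            ⟨ENNReal.mul_ne_top hPe_top hrtop, hPd_top⟩,
            ENNReal.mul_ne_top hPu_top (ENNReal.pow_ne_top hrtop)⟩)
            (ENNReal.mul_ne_top hδtop hrtop),
          ENNReal.toReal_add (ENNReal.add_ne_top.mpr
            ⟨ENNReal.mul_ne_top hPe_top hrtop, hPd_top⟩)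
            (ENNReal.mul_ne_top hPu_top (ENNReal.pow_ne_top hrtop)),
          ENNReal.toReal_add (ENNReal.mul_ne_top hPe_top hrtop) hPd_top,
          ENNReal.toReal_mul, ENNReal.toReal_mul, ENNReal.toReal_mul, ENNReal.toReal_pow]
      rw [hexp]
      have hsumr : (Peq P lam s.val).toReal + (Pdown P lam s.val).toReal
          + (Pup P lam s.val).toReal = 1 := by
        have h5 := congrArg ENNReal.toReal hsum1
        rw [ENNReal.toReal_add (ENNReal.add_ne_top.mpr ⟨hPe_top, hPd_top⟩) hPu_top,
          ENNReal.toReal_add hPe_top hPd_top, ENNReal.toReal_one] at h5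
        exact h5
      have hdivr : pplus.toReal * ((Pdown P lam s.val).toReal + (Pup P lam s.val).toReal)
          ≤ (Pup P lam s.val).toReal := by
        have h5 := ENNReal.toReal_mono hPu_top hmul
        rw [ENNReal.toReal_mul, ENNReal.toReal_add hPd_top hPu_top] at h5
        exact h5
      have hccu : (min c 1).toReal ≤ (Pup P lam s.val).toReal :=
        ENNReal.toReal_mono hPu_top hPup_c
      exact core_real p.toReal pplus.toReal ((((1:ℝ≥0∞) - p)/p)).toReal (min c 1).toReal
        (Peq P lam s.val).toReal (Pdown P lam s.val).toReal (Pup P lam s.val).toReal δ.toReal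
        hpr2 hpr1 hppr hpp1 hρeq hccpos hccu ENNReal.toReal_nonneg ENNReal.toReal_nonneg
        ENNReal.toReal_nonneg hsumr hdivr hδle ENNReal.toReal_nonneg
    -- combine
    obtain ⟨k1, hk1⟩ : ∃ k1, lam s.val - N₀ = k1 + 1 := ⟨lam s.val - N₀ - 1, by omega⟩
    have hfwL : reachProb (walkKernel p) (Set.Iic N₀) (lam s.val)
        = (((1:ℝ≥0∞) - p)/p) ^ (k1 + 1) := by
      rw [hfw_eq _ (le_of_lt hs), hk1]
    rw [hk1, Nat.add_sub_cancel] at hnum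
    calc (∑' s' : SA P F, P s.val s'.val * reachProb (walkKernel p) (Set.Iic N₀) (lam s'.val))
          + δ * reachProb (walkKernel p) (Set.Iic N₀) (lam s.val)
        ≤ (Peq P lam s.val * (((1:ℝ≥0∞) - p)/p) ^ (k1 + 1)
            + Pdown P lam s.val * (((1:ℝ≥0∞) - p)/p) ^ k1
            + Pup P lam s.val * (((1:ℝ≥0∞) - p)/p) ^ (k1 + 1 + 1))
          + δ * (((1:ℝ≥0∞) - p)/p) ^ (k1 + 1) := by
          rw [hfwL]
          exact add_le_add_left hnum _
      _ = (Peq P lam s.val * (((1:ℝ≥0∞) - p)/p) + Pdown P lam s.val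
            + Pup P lam s.val * (((1:ℝ≥0∞) - p)/p) ^ 2 + δ * (((1:ℝ≥0∞) - p)/p))
          * (((1:ℝ≥0∞) - p)/p) ^ k1 := by ring
      _ ≤ (((1:ℝ≥0∞) - p)/p) * (((1:ℝ≥0∞) - p)/p) ^ k1 := mul_le_mul_left hscalar _
      _ = reachProb (walkKernel p) (Set.Iic N₀) (lam s.val) := by rw [hfwL]; ring
  -- hRatio facts
  have hratio_def : ∀ s : SA P F, hRatio P F (walkKernel p) (Set.Iic N₀) (fun s => lam s.val) s
      = (∑' s' : SA P F, P s.val s'.val * reachProb (walkKernel p) (Set.Iic N₀) (lam s'.val))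
        / reachProb (walkKernel p) (Set.Iic N₀) (lam s.val) := fun s => rfl
  have hratio_le : ∀ s : SA P F,
      hRatio P F (walkKernel p) (Set.Iic N₀) (fun s => lam s.val) s ≤ 1 := by
    intro s
    rw [hratio_def]
    rcases le_or_gt (lam s.val) N₀ with h | h
    · have hnum1 : (∑' s' : SA P F, P s.val s'.val
          * reachProb (walkKernel p) (Set.Iic N₀) (lam s'.val)) ≤ 1 := by
        calc (∑' s' : SA P F, P s.val s'.val * reachProb (walkKernel p) (Set.Iic N₀) (lam s'.val))
            ≤ ∑' s' : SA P F, P s.val s'.val * 1 :=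
              Summable.tsum_le_tsum (fun s' => mul_le_mul_right (hfw_le1 _) _)
                ENNReal.summable ENNReal.summable
          _ = ∑' s' : SA P F, P s.val s'.val := tsum_congr fun s' => mul_one _
          _ ≤ ∑' s' : S, P s.val s' :=
              ENNReal.tsum_comp_le_tsum_of_injective Subtype.val_injective _
          _ = 1 := hP s.val
      rw [hfw_one _ h]
      simpa using hnum1
    · have h1 := hhigh s h
      have h2 : (∑' s' : SA P F, P s.val s'.val
          * reachProb (walkKernel p) (Set.Iic N₀) (lam s'.val))
          ≤ reachProb (walkKernel p) (Set.Iic N₀) (lam s.val) := le_trans le_self_add h1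
      calc _ ≤ reachProb (walkKernel p) (Set.Iic N₀) (lam s.val)
            / reachProb (walkKernel p) (Set.Iic N₀) (lam s.val) := ENNReal.div_le_div_right h2 _
        _ = 1 := ENNReal.div_self (hfw_pos _) (hfw_top _)
  have hratio_delta : ∀ s : SA P F, N₀ < lam s.val →
      hRatio P F (walkKernel p) (Set.Iic N₀) (fun s => lam s.val) s + δ ≤ 1 := by
    intro s hs
    rw [hratio_def]
    have h1 := hhigh s hs
    calc (∑' s' : SA P F, P s.val s'.val * reachProb (walkKernel p) (Set.Iic N₀) (lam s'.val))
          / reachProb (walkKernel p) (Set.Iic N₀) (lam s.val) + δ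
        = (∑' s' : SA P F, P s.val s'.val * reachProb (walkKernel p) (Set.Iic N₀) (lam s'.val))
          / reachProb (walkKernel p) (Set.Iic N₀) (lam s.val)
          + (δ * reachProb (walkKernel p) (Set.Iic N₀) (lam s.val))
            / reachProb (walkKernel p) (Set.Iic N₀) (lam s.val) := by
          rw [mul_div_assoc, ENNReal.div_self (hfw_pos _) (hfw_top _), mul_one]
      _ = ((∑' s' : SA P F, P s.val s'.val * reachProb (walkKernel p) (Set.Iic N₀) (lam s'.val))
          + δ * reachProb (walkKernel p) (Set.Iic N₀) (lam s.val))
          / reachProb (walkKernel p) (Set.Iic N₀) (lam s.val) := ENNReal.div_add_div_same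
      _ ≤ reachProb (walkKernel p) (Set.Iic N₀) (lam s.val)
          / reachProb (walkKernel p) (Set.Iic N₀) (lam s.val) := ENNReal.div_le_div_right h1 _
      _ = 1 := ENNReal.div_self (hfw_pos _) (hfw_top _)
  -- bk equations
  have hbk_some_some : ∀ s s' : SA P F, bk (some s) (some s')
      = P s.val s'.val * reachProb (walkKernel p) (Set.Iic N₀) (lam s'.val)
        / reachProb (walkKernel p) (Set.Iic N₀) (lam s.val) := fun s s' => rfl
  have hbk_some_none : ∀ s : SA P F, bk (some s) none
      = 1 - hRatio P F (walkKernel p) (Set.Iic N₀) (fun s => lam s.val) s := fun s => rfl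
  have hbk_none_none : bk none none = 1 := rfl
  have hbk_none_some : ∀ s : SA P F, bk none (some s) = 0 := fun s => rfl
  have hrowsum : ∀ s : SA P F, (∑' s' : SA P F, bk (some s) (some s'))
      = hRatio P F (walkKernel p) (Set.Iic N₀) (fun s => lam s.val) s := by
    intro s
    rw [hratio_def]
    calc (∑' s' : SA P F, bk (some s) (some s'))
        = ∑' s' : SA P F, (P s.val s'.val * reachProb (walkKernel p) (Set.Iic N₀) (lam s'.val))
          * (reachProb (walkKernel p) (Set.Iic N₀) (lam s.val))⁻¹ :=
          tsum_congr fun s' => by rw [hbk_some_some, div_eq_mul_inv]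
      _ = (∑' s' : SA P F, P s.val s'.val * reachProb (walkKernel p) (Set.Iic N₀) (lam s'.val))
          * (reachProb (walkKernel p) (Set.Iic N₀) (lam s.val))⁻¹ := ENNReal.tsum_mul_right
      _ = _ := (div_eq_mul_inv _ _).symm
  have hstoch : IsStochastic bk := by
    intro x
    rw [tsum_option'' (bk x)]
    cases x with
    | none =>
      rw [hbk_none_none]
      have : (∑' s : SA P F, bk none (some s)) = 0 :=
        ENNReal.tsum_eq_zero.mpr fun s => hbk_none_some s
      rw [this, add_zero]
    | some s =>
      rw [hbk_some_none, hrowsum s]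
      exact tsub_add_cancel_of_le (hratio_le s)
  have hbkle : ∀ a b, bk a b ≤ 1 := IsStochastic.le_one' hstoch
  -- none is avoiding
  have hAvnone : none ∈ Av bk T' := by
    show reachProb bk T' none = 0
    unfold reachProb
    rw [ENNReal.tsum_eq_zero]
    have aux : ∀ l : List (Option (SA P F)), l.head? = some none →
        (∃ h : l ≠ [], l.getLast h ∈ T') → pathProb bk l = 0 := by
      intro l
      induction l with
      | nil => intro h _; simp at h
      | cons a t ih =>
        intro hh hlast
        simp only [List.head?_cons, Option.some.injEq] at hh; subst hh
        cases t with
        | nil =>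
          obtain ⟨h1, h2⟩ := hlast
          simp only [List.getLast_singleton] at h2
          obtain ⟨u, hu, -⟩ := h2
          simp at hu
        | cons b u =>
          obtain ⟨h1, h2⟩ := hlast
          rw [pathProb_cons']
          cases b with
          | some v => rw [hbk_none_some v, zero_mul]
          | none =>
            rw [ih rfl ⟨List.cons_ne_nil _ _,
              by rwa [List.getLast_cons (List.cons_ne_nil _ _)] at h2⟩, mul_zero]
    rintro ⟨l, hl⟩
    obtain ⟨hh, hne, hlast, -⟩ := hl
    exact aux l hh ⟨hne, hlast⟩
  -- high states die fast
  have hsurvive_high : ∀ s : SA P F, N₀ < lam s.val →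
      surviveProb bk R (some s) 1 + δ ≤ 1 := by
    intro s hs
    have hrec := surviveProb_succ' bk R 0 (some s)
    rw [zero_add] at hrec
    rw [hrec]
    split_ifs with hmem
    · rw [zero_add]; exact hδ1
    · have hbound : (∑' y, bk (some s) y * surviveProb bk R y 0)
          ≤ hRatio P F (walkKernel p) (Set.Iic N₀) (fun s => lam s.val) s := by
        rw [tsum_option'']
        have h0 : surviveProb bk R none 0 = 0 :=
          surviveProb_of_mem bk R (Or.inr hAvnone) 0
        rw [h0, mul_zero, zero_add]
        calc (∑' s' : SA P F, bk (some s) (some s') * surviveProb bk R (some s') 0)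
            ≤ ∑' s' : SA P F, bk (some s) (some s') * 1 :=
              Summable.tsum_le_tsum (fun s' => mul_le_mul_right
                (surviveProb_le_one bk R hstoch _ 0) _) ENNReal.summable ENNReal.summable
          _ = ∑' s' : SA P F, bk (some s) (some s') := tsum_congr fun _ => mul_one _
          _ = _ := hrowsum s
      calc (∑' y, bk (some s) y * surviveProb bk R y 0) + δ
          ≤ hRatio P F (walkKernel p) (Set.Iic N₀) (fun s => lam s.val) s + δ :=
            add_le_add_left hbound δ
        _ ≤ 1 := hratio_delta s hs
  -- the set of low states is finite
  have hFfin : {s : S | lam s ≤ N₀}.Finite := by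
    have h1 : {s : S | lam s ≤ N₀} = ⋃ n ∈ Set.Iic N₀, {s : S | lam s = n} := by
      ext s
      simp only [Set.mem_setOf_eq, Set.mem_iUnion, Set.mem_Iic]
      constructor
      · intro h; exact ⟨lam s, h, rfl⟩
      · rintro ⟨n, hn, h⟩; omega
    rw [h1]
    exact Set.Finite.biUnion (Set.finite_Iic N₀) (fun n _ => hlmc.2 n)
  have hFlowfin : {x : Option (SA P F) | ∃ s : SA P F, x = some s ∧ lam s.val ≤ N₀}.Finite := by
    have h1 : {s : SA P F | lam s.val ≤ N₀}.Finite := by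
      have h2 : {s : SA P F | lam s.val ≤ N₀} = Subtype.val ⁻¹' {s : S | lam s ≤ N₀} := rfl
      rw [h2]
      exact Set.Finite.preimage Subtype.val_injective.injOn hFfin
    have h3 : {x : Option (SA P F) | ∃ s : SA P F, x = some s ∧ lam s.val ≤ N₀}
        = some '' {s : SA P F | lam s.val ≤ N₀} := by
      ext x
      constructor
      · rintro ⟨s, rfl, h⟩; exact ⟨s, h, rfl⟩
      · rintro ⟨s, h, rfl⟩; exact ⟨s, rfl, h⟩
    rw [h3]
    exact h1.image _
  -- per-state escape data
  have hkey : ∀ x : Option (SA P F), ∃ nx : ℕ, ∃ εx : ℝ≥0∞, 0 < εx ∧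
      (x ∉ R → (∃ s : SA P F, x = some s ∧ lam s.val ≤ N₀) →
        ∀ m, nx ≤ m → surviveProb bk R x m + min εx δ ≤ 1) := by
    intro x
    by_cases hxR : x ∈ R
    · exact ⟨0, 1, one_pos, fun h => absurd hxR h⟩
    · by_cases hxlow : ∃ s : SA P F, x = some s ∧ lam s.val ≤ N₀
      · obtain ⟨s, rfl, hlow⟩ := hxlow
        have hxAv : reachProb bk T' (some s) ≠ 0 := fun h => hxR (Or.inr h)
        obtain ⟨l', hfhp, hpp⟩ := truncate_exists bk hbkle Set.subset_union_left hxAv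
        refine ⟨l'.length, min (pathProb bk l') 1, lt_min hpp one_pos, fun _ _ m hm => ?_⟩
        have h1 := survive_le_of_fhp bk hstoch hfhp m (by omega)
        refine le_trans (add_le_add_right ?_ _) h1
        exact le_trans (min_le_left _ _) (min_le_left _ _)
      · exact ⟨0, 1, one_pos, fun _ h => absurd h hxlow⟩
  choose nfun efun hefun using hkey
  set G : Finset (Option (SA P F)) := hFlowfin.toFinset with hGdef
  set K : ℕ := (G.sup nfun) + 1 with hKdef
  set ε : ℝ≥0∞ := δ ⊓ G.inf efun with hεdef
  have hεpos : 0 < ε :=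
    lt_min hδpos ((Finset.lt_inf_iff (by simp : (0:ℝ≥0∞) < ⊤)).mpr fun x _ => (hefun x).1)
  have hfinal : ∀ x, surviveProb bk R x K + ε ≤ 1 := by
    intro x
    by_cases hxR : x ∈ R
    · rw [surviveProb_of_mem bk R hxR, zero_add]
      exact le_trans (min_le_left _ _) hδ1
    · rcases x with _ | s
      · exact absurd (Or.inr hAvnone) hxR
      · rcases le_or_gt (lam s.val) N₀ with hlow | hhighs
        · have hmemG : (some s : Option (SA P F)) ∈ G := by
            rw [hGdef, Set.Finite.mem_toFinset]
            exact ⟨s, rfl, hlow⟩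
          have h1 := (hefun (some s)).2 hxR ⟨s, rfl, hlow⟩ K
            (le_trans (Finset.le_sup hmemG) (Nat.le_succ _))
          refine le_trans (add_le_add_right ?_ _) h1
          exact le_min (le_trans (min_le_right _ _) (Finset.inf_le hmemG)) (min_le_left _ _)
        · have h1 := hsurvive_high s hhighs
          have h2 : surviveProb bk R (some s) K ≤ surviveProb bk R (some s) 1 :=
            surviveProb_antitone bk R hstoch _ (by omega : 1 ≤ K)
          calc surviveProb bk R (some s) K + ε ≤ surviveProb bk R (some s) 1 + δ :=
                add_le_add h2 (min_le_left _ _)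
            _ ≤ 1 := h1
  exact decisive_of_uniform bk R hstoch (Nat.succ_pos _) hεpos hfinal



end Thms
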